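/- Let μ, A, B, C ∈ ℝ with B ≠ 0 and suppose μ = (A + C)²/(4B). Then the rescaled normal form X' = Y − X², Y' = Z − X, Z' = −μ − A X − B Y − C Z has a unique equilibrium, located at (X_e, X_e², X_e) with X_e = −(A + C)/(2B). Moreover, the Jacobian matrix of the system, which at a point with first coordinate X equals the 3×3 matrix with rows (−2X, 1, 0), (−1, 0, 1), (−A, −B, −C), has determinant −(2BX + A + C) for every X, and in particular the Jacobian at the unique equilibrium is singular (has a zero eigenvalue). This degenerate equilibrium is the saddle-node bifurcation point of the system. -/

import Mathlib

/-- At `μ = (A+C)²/(4B)` with `B ≠ 0`, the rescaled normal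
form has a unique equilibrium `(X_e, X_e², X_e)` with `X_e = −(A+C)/(2B)`;
the Jacobian `!![−2X, 1, 0; −1, 0, 1; −A, −B, −C]` has determinant
`−(2BX + A + C)` for every `X`, and in particular the Jacobian at the unique
equilibrium is singular: this is the saddle-node bifurcation point. -/
theorem rescaled_normal_form_saddle_node (μ A B C : ℝ) (hB : B ≠ 0)
    (hμ : μ = (A + C) ^ 2 / (4 * B)) :
    let Xe : ℝ := -(A + C) / (2 * B)
    let J : ℝ → Matrix (Fin 3) (Fin 3) ℝ :=
      fun X => !![-2 * X, 1, 0; -1, 0, 1; -A, -B, -C]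
    ({p : ℝ × ℝ × ℝ | p.2.1 - p.1 ^ 2 = 0 ∧ p.2.2 - p.1 = 0 ∧
        -μ - A * p.1 - B * p.2.1 - C * p.2.2 = 0} = {(Xe, Xe ^ 2, Xe)}) ∧
    (∀ X : ℝ, (J X).det = -(2 * B * X + A + C)) ∧
    (J Xe).det = 0 := by
  intro Xe J
  have hdet : ∀ X : ℝ, (J X).det = -(2 * B * X + A + C) := by
    intro X
    simp [J, Matrix.det_fin_three]
    ring
  refine ⟨?_, hdet, ?_⟩
  · ext ⟨X, Y, Z⟩
    simp only [Set.mem_setOf_eq, Set.mem_singleton_iff, Prod.mk.injEq]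
    constructor
    · rintro ⟨h1, h2, h3⟩
      have hY : Y = X ^ 2 := by linarith
      have hZ : Z = X := by linarith
      have key : (B * X + (A + C) / 2) ^ 2 = 0 := by
        have h4 : B * (-μ - A * X - B * X ^ 2 - C * X) = 0 := by
          rw [hY, hZ] at h3; rw [h3]; ring
        have hμ' : 4 * B * μ = (A + C) ^ 2 := by
          rw [hμ]; field_simp
        nlinarith [h4, hμ']
      have hX : B * X + (A + C) / 2 = 0 := by
        exact pow_eq_zero_iff (by norm_num) |>.mp key
      have : X = Xe := by
        simp only [Xe]
        field_simp
        linarith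
      exact ⟨this, by rw [hY, this], by rw [hZ, this]⟩
    · rintro ⟨h1, h2, h3⟩
      subst h1 h2 h3
      refine ⟨by ring, by ring, ?_⟩
      have : Xe = -(A + C) / (2 * B) := rfl
      rw [this, hμ]
      field_simp
      ring
  · rw [hdet]
    simp only [Xe]
    field_simp
    ring
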